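/- Fix positive integers p, q and a natural number n with n ≥ p + q. Let A = { F ∈ S^{p/q}_n : {n−q, n−q+1, …, n−1} ⊆ F }. Then |A| = |S^{p/q}_{n−(p+q)}|. -/
import Mathlib

/-- `S p q n` is the collection of finite nonempty sets `F ⊆ ℕ` with
`q * min F ≥ p * |F|` and `max F = n`. -/
def S (p q n : ℕ) : Set (Finset ℕ) :=
  {F | ∃ h : F.Nonempty, q * F.min' h ≥ p * F.card ∧ F.max' h = n}

theorem stmt_4 (p q : ℕ) (hp : 0 < p) (hq : 0 < q) (n : ℕ) (hn : n ≥ p + q) :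
    {F | F ∈ S p q n ∧ Finset.Icc (n - q) (n - 1) ⊆ F}.ncard
      = (S p q (n - (p + q))).ncard := by
  obtain ⟨m, rfl⟩ : ∃ m, n = m + p + q := ⟨n - (p + q), by omega⟩
  have e1 : m + p + q - q = m + p := by omega
  have e2 : m + p + q - (p + q) = m := by omega
  rw [e1, e2]
  set φ : Finset ℕ → Finset ℕ :=
    fun G => G.image (· + p) ∪ Finset.Icc (m + p + 1) (m + p + q) with hφ
  -- injectivity key
  have key : ∀ G : Finset ℕ, G ∈ S p q m →
      (φ G).filter (· ≤ m + p) = G.image (· + p) := by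
    rintro G ⟨hne, hmin, hmax⟩
    have hb : ∀ x ∈ G, x ≤ m := fun x hx => hmax ▸ Finset.le_max' G x hx
    ext y
    simp only [hφ, Finset.mem_filter, Finset.mem_union, Finset.mem_image,
      Finset.mem_Icc]
    constructor
    · rintro ⟨h | h, hy⟩
      · exact h
      · omega
    · rintro ⟨x, hx, rfl⟩
      exact ⟨Or.inl ⟨x, hx, rfl⟩, by have := hb x hx; omega⟩
  have hinj : Set.InjOn φ (S p q m) := by
    intro G₁ h₁ G₂ h₂ hEq
    have h := key G₁ h₁
    rw [hEq, key G₂ h₂] at h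
    exact Finset.image_injective (add_left_injective p) h.symm
  have hset : {F | F ∈ S p q (m + p + q) ∧ Finset.Icc (m + p) (m + p + q - 1) ⊆ F}
      = φ '' (S p q m) := by
    ext F
    constructor
    · rintro ⟨⟨hne, hmin, hmax⟩, hsub⟩
      have hnF : m + p + q ∈ F := hmax ▸ F.max'_mem hne
      have hIcc : Finset.Icc (m + p) (m + p + q) ⊆ F := by
        intro x hx
        rw [Finset.mem_Icc] at hx
        by_cases hx' : x = m + p + q
        · exact hx' ▸ hnF
        · exact hsub (Finset.mem_Icc.mpr ⟨by omega, by omega⟩)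
      have hcard : F.card ≥ q + 1 := by
        have := Finset.card_le_card hIcc
        rwa [Nat.card_Icc, show m + p + q + 1 - (m + p) = q + 1 by omega] at this
      have hminle : F.min' hne ≤ m + p :=
        F.min'_le _ (hIcc (Finset.mem_Icc.mpr ⟨le_refl _, by omega⟩))
      have hpmin : F.min' hne ≥ p + 1 := by
        by_contra h
        push_neg at h
        have h1 : q * F.min' hne ≤ q * p := Nat.mul_le_mul_left q (by omega)
        have h2 : p * (q + 1) ≤ p * F.card := Nat.mul_le_mul_left p hcard
        nlinarith
      set K := F.filter (· ≤ m + p) with hK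
      have hKb : ∀ x ∈ K, p + 1 ≤ x ∧ x ≤ m + p := by
        intro x hx
        rw [hK, Finset.mem_filter] at hx
        exact ⟨le_trans hpmin (F.min'_le x hx.1), hx.2⟩
      set G := K.image (· - p) with hG
      have hdecomp : F = K ∪ Finset.Icc (m + p + 1) (m + p + q) := by
        ext x
        rw [Finset.mem_union, hK, Finset.mem_filter, Finset.mem_Icc]
        constructor
        · intro hx
          by_cases h : x ≤ m + p
          · exact Or.inl ⟨hx, h⟩
          · exact Or.inr ⟨by omega, hmax ▸ F.le_max' x hx⟩
        · rintro (⟨hx, _⟩ | hx)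
          · exact hx
          · exact hIcc (Finset.mem_Icc.mpr ⟨by omega, hx.2⟩)
      have himg : (K.image (· - p)).image (· + p) = K := by
        rw [Finset.image_image]
        have : K.image ((· + p) ∘ (· - p)) = K.image id :=
          Finset.image_congr fun x hx => by
            have := hKb x hx; simp; omega
        rw [this, Finset.image_id]
      have hφG : φ G = F := by
        show G.image (· + p) ∪ Finset.Icc (m + p + 1) (m + p + q) = F
        rw [hG, himg, ← hdecomp]
      have hmpK : m + p ∈ K := by
        rw [hK, Finset.mem_filter]
        exact ⟨hIcc (Finset.mem_Icc.mpr ⟨le_refl _, by omega⟩), le_refl _⟩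
      have hGne : G.Nonempty := ⟨m, Finset.mem_image.mpr ⟨m + p, hmpK, by omega⟩⟩
      have hGb : ∀ x ∈ G, x ≤ m := by
        rintro x hx
        rw [hG, Finset.mem_image] at hx
        obtain ⟨y, hy, rfl⟩ := hx
        have := hKb y hy; omega
      have hGmax : G.max' hGne = m :=
        le_antisymm (Finset.max'_le _ _ _ hGb)
          (Finset.le_max' _ m (Finset.mem_image.mpr ⟨m + p, hmpK, by omega⟩))
      have hminK : F.min' hne ∈ K := by
        rw [hK, Finset.mem_filter]
        exact ⟨F.min'_mem hne, hminle⟩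
      have hGmin : G.min' hGne = F.min' hne - p := by
        apply le_antisymm
        · exact Finset.min'_le _ _ (Finset.mem_image.mpr ⟨F.min' hne, hminK, rfl⟩)
        · apply Finset.le_min'
          rintro y hy
          rw [hG, Finset.mem_image] at hy
          obtain ⟨z, hz, rfl⟩ := hy
          have := F.min'_le z (by rw [hK, Finset.mem_filter] at hz; exact hz.1)
          omega
      have hGcard : G.card = F.card - q := by
        have hinjK : Set.InjOn (· - p) K := by
          intro a ha b hb hab
          have h1 := hKb a ha
          have h2 := hKb b hb
          simp only at hab
          omega
        have h1 : G.card = K.card := by rw [hG]; exact Finset.card_image_of_injOn hinjK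
        have hdisj : Disjoint K (Finset.Icc (m + p + 1) (m + p + q)) := by
          rw [Finset.disjoint_left]
          intro a ha ha'
          rw [Finset.mem_Icc] at ha'
          have := hKb a ha
          omega
        have h2 : F.card = K.card + q := by
          rw [hdecomp, Finset.card_union_of_disjoint hdisj, Nat.card_Icc]
          omega
        omega
      refine ⟨G, ⟨hGne, ?_, hGmax⟩, hφG⟩
      rw [hGmin, hGcard, Nat.mul_sub, Nat.mul_sub]
      exact tsub_le_tsub hmin (le_of_eq (mul_comm q p))
    · rintro ⟨G, ⟨hne, hmin, hmax⟩, rfl⟩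
      have hb : ∀ x ∈ G, x ≤ m := fun x hx => hmax ▸ Finset.le_max' G x hx
      have hminmem : G.min' hne + p ∈ φ G :=
        Finset.mem_union_left _ (Finset.mem_image.mpr ⟨G.min' hne, G.min'_mem hne, rfl⟩)
      have hnmem : m + p + q ∈ φ G :=
        Finset.mem_union_right _ (Finset.mem_Icc.mpr ⟨by omega, le_refl _⟩)
      have hφne : (φ G).Nonempty := ⟨_, hnmem⟩
      have hub : ∀ x ∈ φ G, x ≤ m + p + q := by
        intro x hx
        rw [hφ, Finset.mem_union, Finset.mem_image, Finset.mem_Icc] at hx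
        rcases hx with ⟨y, hy, rfl⟩ | hx
        · have := hb y hy; omega
        · omega
      have hlb : ∀ x ∈ φ G, G.min' hne + p ≤ x := by
        intro x hx
        rw [hφ, Finset.mem_union, Finset.mem_image, Finset.mem_Icc] at hx
        have hmle : G.min' hne ≤ m := G.min'_le m (by rw [← hmax]; exact G.max'_mem hne)
        rcases hx with ⟨y, hy, rfl⟩ | hx
        · have := G.min'_le y hy; omega
        · omega
      have hφmax : (φ G).max' hφne = m + p + q :=
        le_antisymm (Finset.max'_le _ _ _ hub) (Finset.le_max' _ _ hnmem)
      have hφmin : (φ G).min' hφne = G.min' hne + p :=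
        le_antisymm (Finset.min'_le _ _ hminmem) (Finset.le_min' _ _ _ hlb)
      have hφcard : (φ G).card = G.card + q := by
        rw [hφ]
        have hdisj : Disjoint (G.image (· + p)) (Finset.Icc (m + p + 1) (m + p + q)) := by
          rw [Finset.disjoint_left]
          intro a ha ha'
          rw [Finset.mem_image] at ha
          rw [Finset.mem_Icc] at ha'
          obtain ⟨y, hy, rfl⟩ := ha
          have := hb y hy
          omega
        rw [Finset.card_union_of_disjoint hdisj, Nat.card_Icc,
          Finset.card_image_of_injective _ (add_left_injective p)]
        omega
      refine ⟨⟨hφne, ?_, hφmax⟩, ?_⟩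
      · rw [hφmin, hφcard, Nat.mul_add, Nat.mul_add]
        exact Nat.add_le_add hmin (le_of_eq (mul_comm p q))
      · intro x hx
        rw [Finset.mem_Icc] at hx
        by_cases h : x = m + p
        · subst h
          exact Finset.mem_union_left _
            (Finset.mem_image.mpr ⟨m, hmax ▸ G.max'_mem hne, rfl⟩)
        · exact Finset.mem_union_right _ (Finset.mem_Icc.mpr ⟨by omega, by omega⟩)
  rw [hset]
  exact Set.ncard_image_of_injOn hinj
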